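/- Let C be a ring and let 𝒞 be the smallest class of C-modules containing all free C-modules, stable under filtered colimits, and stable under cokernels of cofibrations. If f : F → M is an epimorphism from a free C-module F onto a module M belonging to 𝒞, then the kernel of f belongs to 𝒞. -/

import Mathlib

universe u

open CategoryTheory CategoryTheory.Limits

/-- A class of `R`-modules is stable under filtered colimits if, for every
filtered diagram of modules all of whose objects belong to the class, the
colimit (i.e. the point of any colimit cocone) again belongs to the class. -/
def StableUnderFilteredColimits (R : Type u) [Ring R] (S : Set (ModuleCat.{u} R)) : Prop :=
  ∀ (J : Type u) (_ : SmallCategory J) (_ : IsFiltered J)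
    (F : J ⥤ ModuleCat.{u} R) (c : Cocone F), IsColimit c →
    (∀ j : J, F.obj j ∈ S) → c.pt ∈ S

/-- The 2/3 axiom: for every short exact sequence `0 → M → N → P → 0`, if two of the
three modules belong to the class, then so does the third. -/
def SatisfiesTwoOfThree (R : Type u) [Ring R] (S : Set (ModuleCat.{u} R)) : Prop :=
  ∀ (M N P : ModuleCat.{u} R) (f : M →ₗ[R] N) (g : N →ₗ[R] P),
    Function.Injective f → Function.Surjective g → Function.Exact f g →
      ((M ∈ S → N ∈ S → P ∈ S) ∧ (M ∈ S → P ∈ S → N ∈ S) ∧ (N ∈ S → P ∈ S → M ∈ S))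

/-- A class of `R`-modules is exact if it is stable under filtered colimits and
satisfies the 2/3 axiom. -/
def IsExactClass (R : Type u) [Ring R] (S : Set (ModuleCat.{u} R)) : Prop :=
  StableUnderFilteredColimits R S ∧ SatisfiesTwoOfThree R S

/-- An `R`-module is regular (in the sense of Vogel) if it belongs to every exact class
containing the module `R` itself (i.e. to the smallest such class). -/
def IsRegularModule (R : Type u) [Ring R] (M : ModuleCat.{u} R) : Prop :=
  ∀ S : Set (ModuleCat.{u} R), IsExactClass R S → ModuleCat.of R R ∈ S → M ∈ S

/-- A ring `R` is regular in the sense of Vogel if every `R`-module is regular,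
i.e. every exact class of `R`-modules containing `R` contains all `R`-modules. -/
def IsVogelRegular (R : Type u) [Ring R] : Prop :=
  ∀ M : ModuleCat.{u} R, IsRegularModule R M

/-- A ring is right regular (in the sense of Vogel) if the opposite ring is regular for
left modules, i.e. the category of right `R`-modules (= left `Rᵐᵒᵖ`-modules) has the
Vogel regularity property. -/
def IsVogelRightRegular (R : Type u) [Ring R] : Prop := IsVogelRegular Rᵐᵒᵖ

/-- A module is flat iff it is a filtered colimit of finitely generated free modules
(Lazard's theorem); we take this characterization as the definition of flatness,
which makes sense over an arbitrary (possibly non-commutative) ring. -/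
def IsLazardFlat (R : Type u) [Ring R] (M : Type u) [AddCommGroup M] [Module R M] : Prop :=
  ∃ (J : Type u) (_ : SmallCategory J) (_ : IsFiltered J)
    (F : J ⥤ ModuleCat.{u} R) (c : Cocone F) (_ : IsColimit c),
    (∀ j : J, ∃ n : ℕ, Nonempty ((F.obj j) ≃ₗ[R] (Fin n → R))) ∧
    Nonempty (c.pt ≃ₗ[R] M)

/-- A class of modules is stable under cokernels of cofibrations if, for every short
exact sequence `0 → M → N → P → 0` with `M` and `N` in the class, `P` also belongs
to the class. -/
def StableUnderCokernelsOfCofibrations (R : Type u) [Ring R] (S : Set (ModuleCat.{u} R)) : Prop :=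
  ∀ (M N P : ModuleCat.{u} R) (f : M →ₗ[R] N) (g : N →ₗ[R] P),
    Function.Injective f → Function.Surjective g → Function.Exact f g →
      M ∈ S → N ∈ S → P ∈ S

/-- The defining properties of the class `𝒞`: containing all free modules, stability
under filtered colimits, and stability under cokernels of cofibrations. -/
def IsFreeColimCokerClosed (R : Type u) [Ring R] (S : Set (ModuleCat.{u} R)) : Prop :=
  (∀ M : ModuleCat.{u} R, Module.Free R M → M ∈ S) ∧
    StableUnderFilteredColimits R S ∧ StableUnderCokernelsOfCofibrations R S

/-- The smallest class `𝒞` of `R`-modules containing all free modules, stable under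
filtered colimits and under cokernels of cofibrations (realized as the intersection
of all such classes). -/
def VogelClassC (R : Type u) [Ring R] : Set (ModuleCat.{u} R) :=
  {M : ModuleCat.{u} R | ∀ S : Set (ModuleCat.{u} R), IsFreeColimCokerClosed R S → M ∈ S}

namespace VogelAux

/-- A `Type u` copy of `ℕ` (avoiding the `uliftCategory` instance on `ULift ℕ`). -/
structure NatU : Type u where
  n : ℕ

instance : Preorder (NatU.{u}) := Preorder.lift NatU.n
instance : IsDirected (NatU.{u}) (· ≤ ·) :=
  ⟨fun a b => ⟨⟨max a.n b.n⟩, by exact le_max_left a.n b.n, by exact le_max_right a.n b.n⟩⟩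
instance : Nonempty (NatU.{u}) := ⟨⟨0⟩⟩

variable {C : Type u} [Ring C]

lemma vogelClassC_closed : IsFreeColimCokerClosed C (VogelClassC C) :=
  ⟨fun M hM S hS => hS.1 M hM,
   fun J iJ fJ F c hc hmem S hS => hS.2.1 J iJ fJ F c hc (fun j => hmem j S hS),
   fun M N P f g hf hg he hM hN S hS => hS.2.2 M N P f g hf hg he (hM S hS) (hN S hS)⟩

lemma mcomp_apply {A B D : ModuleCat.{u} C} (f : A ⟶ B) (g : B ⟶ D) (x : A) :
    (f ≫ g) x = g (f x) := rfl

/-- Criterion for a cocone over a filtered diagram in `ModuleCat` to be a colimit. -/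
lemma isColimit_of_surj_of_eventually_zero {J : Type u} [SmallCategory J] [IsFiltered J]
    (B : J ⥤ ModuleCat.{u} C) (s : Cocone B)
    (ha : ∀ y : s.pt, ∃ (j : J) (b : B.obj j), s.ι.app j b = y)
    (hb : ∀ (j : J) (b : B.obj j), s.ι.app j b = 0 → ∃ (k : J) (t : j ⟶ k), B.map t b = 0) :
    Nonempty (IsColimit s) := by
  let d : colimit B ⟶ s.pt := colimit.desc B s
  have hd : ∀ (j : J) (b : B.obj j), d (colimit.ι B j b) = s.ι.app j b := by
    intro j b
    rw [← mcomp_apply (colimit.ι B j) d, colimit.ι_desc]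
  have hsurj : Function.Surjective d := by
    intro y
    obtain ⟨j, b, hb'⟩ := ha y
    exact ⟨colimit.ι B j b, by rw [hd]; exact hb'⟩
  have hinj : Function.Injective d := by
    rw [injective_iff_map_eq_zero]
    intro x hx
    obtain ⟨j, b, rfl⟩ := Concrete.isColimit_exists_rep B (colimit.isColimit B) x
    have hx' : s.ι.app j b = 0 := by rw [← hd j b]; exact hx
    obtain ⟨k, t, ht⟩ := hb j b hx'
    show colimit.ι B j b = 0
    have : colimit.ι B j b = colimit.ι B k (B.map t b) := by
      rw [← mcomp_apply (B.map t) (colimit.ι B k), colimit.w]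
    rw [this, ht, map_zero]
  let e := LinearEquiv.ofBijective (d.hom : ↥(colimit B) →ₗ[C] ↥(s.pt)) ⟨hinj, hsurj⟩
  haveI : IsIso d := by
    refine ⟨ModuleCat.ofHom (e.symm.toLinearMap : ↥(s.pt) →ₗ[C] ↥(colimit B)),
      ModuleCat.hom_ext (LinearMap.ext fun x => ?_), ModuleCat.hom_ext (LinearMap.ext fun x => ?_)⟩
    · exact e.symm_apply_apply x
    · exact e.apply_symm_apply x
  have hdd : (colimit.isColimit B).desc s = d := rfl
  haveI : IsIso ((colimit.isColimit B).desc s) := by rw [hdd]; infer_instance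
  exact ⟨IsColimit.ofPointIso (colimit.isColimit B)⟩


section Retract

/-- Classes stable under filtered colimits are stable under retracts. -/
lemma mem_of_retract {S : Set (ModuleCat.{u} C)} (hS : StableUnderFilteredColimits C S)
    (X : ModuleCat.{u} C) (hX : X ∈ S) (N : ModuleCat.{u} C)
    (r : X →ₗ[C] N) (s : N →ₗ[C] X) (hrs : ∀ n, r (s n) = n) : N ∈ S := by
  set e : X →ₗ[C] X := s ∘ₗ r with he
  have hee : ∀ x, e (e x) = e x := fun x => by simp [he, hrs]
  have hre : ∀ x, r (e x) = r x := fun x => by simp [he, hrs]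
  have hpowe : ∀ (n : ℕ) (x : X), r ((e ^ n) x) = r x := by
    intro n
    induction n with
    | zero => intro x; simp
    | succ n ih => intro x; rw [pow_succ]; simp only [Module.End.mul_apply]; rw [ih, hre]
  let Fn : NatU.{u} ⥤ ModuleCat.{u} C :=
    { obj := fun _ => X
      map := fun {i j} _ => (ModuleCat.ofHom (e ^ (j.n - i.n) : X →ₗ[C] X) : X ⟶ X)
      map_id := fun i => by
        show (ModuleCat.ofHom (e ^ (i.n - i.n) : X →ₗ[C] X) : X ⟶ X) = 𝟙 X
        rw [Nat.sub_self, pow_zero]; rfl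
      map_comp := fun {i j k} h1 h2 => by
        show (ModuleCat.ofHom (e ^ (k.n - i.n) : X →ₗ[C] X) : X ⟶ X)
          = (ModuleCat.ofHom ((e ^ (k.n - j.n) : X →ₗ[C] X).comp (e ^ (j.n - i.n) : X →ₗ[C] X)) : X ⟶ X)
        have hij' : i ≤ j := leOfHom h1
        have hjk' : j ≤ k := leOfHom h2
        have hij : i.n ≤ j.n := hij'
        have hjk : j.n ≤ k.n := hjk'
        rw [← Module.End.mul_eq_comp, ← pow_add]
        congr 2
        omega }
  let cn : Cocone Fn :=
    { pt := N
      ι := { app := fun _ => (ModuleCat.ofHom r : X ⟶ N)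
             naturality := fun i j h => by
               refine ModuleCat.hom_ext (LinearMap.ext fun x => ?_)
               show r ((e ^ (j.n - i.n)) x) = _
               rw [hpowe]
               rfl } }
  have hcolim : IsColimit cn := by
    refine { desc := fun c' => (ModuleCat.ofHom ((c'.ι.app ⟨0⟩).hom ∘ₗ s) : N ⟶ c'.pt), fac := ?_, uniq := ?_ }
    · intro c' j
      have key : ∀ (n : ℕ) (x : X), (c'.ι.app ⟨n+1⟩) (e x) = (c'.ι.app ⟨n⟩) x := by
        intro n x
        have hw := c'.w (homOfLE (Nat.le_succ n) : (⟨n⟩ : NatU.{u}) ⟶ ⟨n+1⟩)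
        have hfn : Fn.map (homOfLE (Nat.le_succ n) : (⟨n⟩ : NatU.{u}) ⟶ ⟨n+1⟩) = (ModuleCat.ofHom e : X ⟶ X) := by
          show (ModuleCat.ofHom (e ^ ((n+1) - n) : X →ₗ[C] X) : X ⟶ X) = _
          rw [Nat.add_sub_cancel_left, pow_one]
        have := ConcreteCategory.congr_hom hw x
        rw [mcomp_apply, hfn] at this
        exact this
      have key2 : ∀ (n : ℕ) (x : X), (c'.ι.app ⟨n⟩) (e x) = (c'.ι.app ⟨n⟩) x := by
        intro n x
        rw [← key n (e x), hee, key n x]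
      have key3 : ∀ (n : ℕ) (x : X), (c'.ι.app ⟨n⟩) x = (c'.ι.app ⟨0⟩) x := by
        intro n
        induction n with
        | zero => intro x; rfl
        | succ n ih => intro x; rw [← key2 (n+1) x, key n x, ih x]
      refine ModuleCat.hom_ext (LinearMap.ext fun x => ?_)
      show (c'.ι.app ⟨0⟩) (s (r x)) = (c'.ι.app j) x
      have : s (r x) = e x := rfl
      rw [this, key2 0, key3 j.n]
    · intro c' m hm
      refine ModuleCat.hom_ext (LinearMap.ext fun n => ?_)
      have := ConcreteCategory.congr_hom (hm ⟨0⟩) (s n)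
      simp only [mcomp_apply] at this
      show m n = (c'.ι.app ⟨0⟩) (s n)
      have h2 : m n = m (r (s n)) := (congrArg m (hrs n)).symm
      exact h2.trans this
  exact hS (NatU.{u}) inferInstance inferInstance Fn cn hcolim (fun _ => hX)

lemma mem_of_linearEquiv {S : Set (ModuleCat.{u} C)} (hS : StableUnderFilteredColimits C S)
    (A B : ModuleCat.{u} C) (e : A ≃ₗ[C] B) (hA : A ∈ S) : B ∈ S :=
  mem_of_retract hS A hA B (e : A →ₗ[C] B) (e.symm : B →ₗ[C] A) (fun n => e.apply_symm_apply n)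

end Retract


lemma eventually_zero {J : Type u} [SmallCategory J] [IsFiltered J] (D : J ⥤ ModuleCat.{u} C)
    {c : Cocone D} (hc : IsColimit c) (j : J) (a : D.obj j) (h : c.ι.app j a = 0) :
    ∃ (k : J) (t : j ⟶ k), D.map t a = 0 := by
  have h' : c.ι.app j a = c.ι.app j 0 := by simpa using h
  obtain ⟨k, t, t', ht⟩ := Concrete.isColimit_exists_of_rep_eq D hc a 0 h'
  exact ⟨k, t, by simpa using ht⟩

section ProdFree

lemma prod_free_mem (A : ModuleCat.{u} C) (hA : A ∈ VogelClassC C)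
    (F : ModuleCat.{u} C) (hF : Module.Free C F) :
    ModuleCat.of C (A × F) ∈ VogelClassC C := by
  let U : Set (ModuleCat.{u} C) :=
    {A | A ∈ VogelClassC C ∧ ∀ (F₀ : ModuleCat.{u} C), Module.Free C F₀ →
      ModuleCat.of C (A × F₀) ∈ VogelClassC C}
  have hU : IsFreeColimCokerClosed C U := by
    refine ⟨?_, ?_, ?_⟩
    · intro M hM
      refine ⟨vogelClassC_closed.1 M hM, fun F₀ hF₀ => ?_⟩
      haveI := hM; haveI := hF₀
      exact vogelClassC_closed.1 _ (inferInstanceAs (Module.Free C (↥M × ↥F₀)))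
    · intro J iJ fJ D c hc hmem
      refine ⟨vogelClassC_closed.2.1 J iJ fJ D c hc (fun j => (hmem j).1), ?_⟩
      intro F₀ hF₀
      let D' : J ⥤ ModuleCat.{u} C :=
        { obj := fun j => ModuleCat.of C (D.obj j × F₀)
          map := fun {i j} t =>
            ModuleCat.ofHom (((D.map t).hom.prodMap (LinearMap.id : F₀ →ₗ[C] F₀)) : _ →ₗ[C] _)
          map_id := fun j => by
            refine ModuleCat.hom_ext (LinearMap.ext fun x => ?_)
            show ((D.map (𝟙 j)).hom.prodMap LinearMap.id) x = x
            rw [D.map_id]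
            rfl
          map_comp := fun {i j k} t1 t2 => by
            refine ModuleCat.hom_ext (LinearMap.ext fun x => ?_)
            show ((D.map (t1 ≫ t2)).hom.prodMap LinearMap.id) x = _
            rw [D.map_comp]
            rfl }
      let s' : Cocone D' :=
        { pt := ModuleCat.of C (c.pt × F₀)
          ι := { app := fun j => ModuleCat.ofHom (((c.ι.app j).hom.prodMap (LinearMap.id : F₀ →ₗ[C] F₀)) : _ →ₗ[C] _)
                 naturality := fun i j t => by
                   refine ModuleCat.hom_ext (LinearMap.ext fun x => ?_)
                   show ((c.ι.app j) ((D.map t) x.1), x.2) = ((c.ι.app i) x.1, x.2)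
                   have hw := ConcreteCategory.congr_hom (c.w t) x.1
                   rw [mcomp_apply] at hw
                   exact congrArg (fun y => (y, x.2)) hw } }
      have hcol : Nonempty (IsColimit s') := by
        apply isColimit_of_surj_of_eventually_zero
        · rintro ⟨x, v⟩
          obtain ⟨j, a, ha⟩ := Concrete.isColimit_exists_rep D hc x
          exact ⟨j, (a, v), congrArg (fun y => (y, v)) ha⟩
        · rintro j ⟨a, v⟩ h0
          have h1 : (c.ι.app j) a = 0 := congrArg Prod.fst h0
          have h2 : v = 0 := congrArg Prod.snd h0
          obtain ⟨k, t, ht⟩ := eventually_zero D hc j a h1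
          exact ⟨k, t, Prod.ext_iff.mpr ⟨ht, h2⟩⟩
      exact vogelClassC_closed.2.1 J iJ fJ D' s' hcol.some (fun j => (hmem j).2 F₀ hF₀)
    · intro M N P f g hinj hsurj hexact hM hN
      refine ⟨vogelClassC_closed.2.2 M N P f g hinj hsurj hexact hM.1 hN.1, ?_⟩
      intro F₀ hF₀
      refine vogelClassC_closed.2.2 M (ModuleCat.of C (N × F₀)) (ModuleCat.of C (P × F₀))
        ((LinearMap.inl C N F₀) ∘ₗ f) (g.prodMap LinearMap.id) ?_ ?_ ?_ hM.1 (hN.2 F₀ hF₀)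
      · intro a b hab
        exact hinj (congrArg Prod.fst hab)
      · rintro ⟨p, v⟩
        obtain ⟨n, hn⟩ := hsurj p
        exact ⟨(n, v), congrArg (fun y => (y, v)) hn⟩
      · rintro ⟨n, v⟩
        constructor
        · intro h
          have h1 : g n = 0 := congrArg Prod.fst h
          have h2 : v = 0 := congrArg Prod.snd h
          obtain ⟨m, hm⟩ := (hexact n).mp h1
          exact ⟨m, Prod.ext_iff.mpr ⟨hm, h2.symm⟩⟩
        · rintro ⟨m, hmv⟩
          have h1 : f m = n := congrArg Prod.fst hmv
          have h2 : (0 : F₀) = v := congrArg Prod.snd hmv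
          show ((g n : P), v) = 0
          refine Prod.ext_iff.mpr ⟨?_, h2.symm⟩
          rw [← h1]
          exact hexact.apply_apply_eq_zero m
  exact (hA U hU).2 F hF

end ProdFree


section ExtClosure

/-- The class `𝒞` is stable under extensions. -/
lemma ext_mem (A B Q : ModuleCat.{u} C) (f : A →ₗ[C] B) (g : B →ₗ[C] Q)
    (hinj : Function.Injective f) (hsurj : Function.Surjective g) (hexact : Function.Exact f g)
    (hA : A ∈ VogelClassC C) (hQ : Q ∈ VogelClassC C) : B ∈ VogelClassC C := by
  let TB : Set (ModuleCat.{u} C) :=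
    {Q | Q ∈ VogelClassC C ∧ ∀ (A B : ModuleCat.{u} C) (f : A →ₗ[C] B) (g : B →ₗ[C] Q),
      Function.Injective f → Function.Surjective g → Function.Exact f g →
      A ∈ VogelClassC C → B ∈ VogelClassC C}
  have hTB : IsFreeColimCokerClosed C TB := by
    refine ⟨?_, ?_, ?_⟩
    · -- free case : the extension splits
      intro Q hQfree
      refine ⟨vogelClassC_closed.1 Q hQfree, ?_⟩
      intro A B f g hinj hsurj hexact hA
      haveI : Module.Free C Q := hQfree; haveI : Module.Projective C Q := Module.Projective.of_free
      obtain ⟨σ, hσ⟩ := Module.projective_lifting_property g LinearMap.id hsurj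
      let ℓ : (A × Q) →ₗ[C] B := f ∘ₗ LinearMap.fst C A Q + σ ∘ₗ LinearMap.snd C A Q
      have hℓ : ∀ aq : ↥A × ↥Q, ℓ aq = f aq.1 + σ aq.2 := fun _ => rfl
      have hℓg : ∀ aq : ↥A × ↥Q, g (ℓ aq) = aq.2 := by
        intro aq
        have h1 : g (f aq.1) = 0 := hexact.apply_apply_eq_zero aq.1
        have h2 : g (σ aq.2) = aq.2 := DFunLike.congr_fun hσ aq.2
        rw [hℓ, map_add, h1, h2, zero_add]
      have hker : ∀ aq : ↥A × ↥Q, ℓ aq = 0 → aq = 0 := by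
        intro aq h
        have h2 : aq.2 = 0 := by rw [← hℓg aq, h, map_zero]
        have h4 := h
        rw [hℓ, h2, map_zero, add_zero] at h4
        have h1 : aq.1 = 0 := hinj (by rw [h4, map_zero])
        exact Prod.ext_iff.mpr ⟨h1, h2⟩
      have hsurjℓ : Function.Surjective ℓ := by
        intro b
        have hb : g (b - σ (g b)) = 0 := by
          have h2 : g (σ (g b)) = g b := DFunLike.congr_fun hσ (g b)
          rw [map_sub, h2, sub_self]
        obtain ⟨a, ha⟩ := (hexact _).mp hb
        refine ⟨(a, g b), ?_⟩
        rw [hℓ]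
        show f a + σ (g b) = b
        rw [ha]
        exact sub_add_cancel b (σ (g b))
      let eqv : (↥A × ↥Q) ≃ₗ[C] ↥B :=
        LinearEquiv.ofBijective ℓ ⟨(injective_iff_map_eq_zero ℓ).mpr hker, hsurjℓ⟩
      exact mem_of_linearEquiv vogelClassC_closed.2.1 (ModuleCat.of C (A × Q)) B eqv
        (prod_free_mem A hA Q hQfree)
    · -- stability under filtered colimits
      intro J iJ fJ Dg c hc hmem
      refine ⟨vogelClassC_closed.2.1 J iJ fJ Dg c hc (fun j => (hmem j).1), ?_⟩
      intro A B f g hinj hsurj hexact hA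
      let cj : ∀ j : J, (Dg.obj j →ₗ[C] c.pt) := fun j => (c.ι.app j).hom
      have cjeq : ∀ (j : J) (a : Dg.obj j), cj j a = c.ι.app j a := fun _ _ => rfl
      let Ksub : ∀ j : J, Submodule C (Dg.obj j × B) := fun j =>
        LinearMap.ker ((cj j ∘ₗ LinearMap.fst C (Dg.obj j) B)
          - (g ∘ₗ LinearMap.snd C (Dg.obj j) B))
      have hmemK : ∀ (j : J) (a : Dg.obj j) (b : B), cj j a = g b → (a, b) ∈ Ksub j := by
        intro j a b h
        show cj j a - g b = 0
        rw [h, sub_self]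
      have hKval : ∀ (j : J) (d : ↥(Ksub j)),
          cj j (d : ↥(Dg.obj j) × ↥B).1 = g (d : ↥(Dg.obj j) × ↥B).2 := by
        intro j d
        have hm : cj j (d : ↥(Dg.obj j) × ↥B).1 - g (d : ↥(Dg.obj j) × ↥B).2 = 0 := d.2
        exact sub_eq_zero.mp hm
      let PB : J ⥤ ModuleCat.{u} C :=
        { obj := fun j => ModuleCat.of C ↥(Ksub j)
          map := fun {i j} t => ModuleCat.ofHom <| LinearMap.codRestrict (Ksub j)
            (((Dg.map t).hom.prodMap (LinearMap.id : B →ₗ[C] B)) ∘ₗ (Ksub i).subtype)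
            (fun d => by
               have hw := ConcreteCategory.congr_hom (c.w t) ((show ↥(Ksub i) from d) : ↥(Dg.obj i) × ↥B).1
               rw [mcomp_apply] at hw
               exact hmemK j _ _ (hw.trans (hKval i (show ↥(Ksub i) from d))))
          map_id := fun j => by
            refine ModuleCat.hom_ext (LinearMap.ext fun d => Subtype.ext ?_)
            show ((Dg.map (𝟙 j)).hom.prodMap LinearMap.id) ((show ↥(Ksub j) from d) : ↥(Dg.obj j) × ↥B)
              = ((show ↥(Ksub j) from d) : ↥(Dg.obj j) × ↥B)
            rw [Dg.map_id]
            rfl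
          map_comp := fun {i j k} t1 t2 => by
            refine ModuleCat.hom_ext (LinearMap.ext fun d => Subtype.ext ?_)
            show ((Dg.map (t1 ≫ t2)).hom.prodMap LinearMap.id) ((show ↥(Ksub i) from d) : ↥(Dg.obj i) × ↥B) = _
            rw [Dg.map_comp]
            rfl }
      have hPB : ∀ j, PB.obj j ∈ VogelClassC C := by
        intro j
        let φ : A →ₗ[C] (PB.obj j) := LinearMap.codRestrict (Ksub j)
          ((LinearMap.inr C (Dg.obj j) B) ∘ₗ f)
          (fun a => hmemK j 0 (f a)
            (by rw [map_zero]; exact (hexact.apply_apply_eq_zero a).symm))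
        let ψ : (PB.obj j) →ₗ[C] (Dg.obj j) := (LinearMap.fst C (Dg.obj j) B) ∘ₗ (Ksub j).subtype
        have hφinj : Function.Injective φ := by
          intro a b hab
          exact hinj (congrArg (fun z : ↥(Ksub j) => (z : ↥(Dg.obj j) × ↥B).2) hab)
        have hψsurj : Function.Surjective ψ := by
          intro a
          obtain ⟨b, hb⟩ := hsurj (cj j a)
          exact ⟨⟨(a, b), hmemK j a b hb.symm⟩, rfl⟩
        have hexactφψ : Function.Exact φ ψ := by
          intro d
          constructor
          · intro hd
            have h1 : ((show ↥(Ksub j) from d) : ↥(Dg.obj j) × ↥B).1 = 0 := hd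
            have h0 : g ((show ↥(Ksub j) from d) : ↥(Dg.obj j) × ↥B).2 = 0 := by
              rw [← hKval j (show ↥(Ksub j) from d), h1, map_zero]
            obtain ⟨a, ha⟩ := (hexact _).mp h0
            exact ⟨a, Subtype.ext (Prod.ext_iff.mpr ⟨h1.symm, ha⟩)⟩
          · rintro ⟨a, rfl⟩
            rfl
        exact (hmem j).2 A (PB.obj j) φ ψ hφinj hψsurj hexactφψ hA
      let sB : Cocone PB :=
        { pt := B
          ι := { app := fun j => ModuleCat.ofHom <| (LinearMap.snd C (Dg.obj j) B) ∘ₗ (Ksub j).subtype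
                 naturality := fun i j t => rfl } }
      have hcol : Nonempty (IsColimit sB) := by
        apply isColimit_of_surj_of_eventually_zero
        · intro b
          obtain ⟨j, a, ha⟩ := Concrete.isColimit_exists_rep Dg hc (g b)
          exact ⟨j, ⟨(a, b), hmemK j a b ha⟩, rfl⟩
        · intro j d hd
          have h2 : ((show ↥(Ksub j) from d) : ↥(Dg.obj j) × ↥B).2 = 0 := hd
          have h0 : c.ι.app j ((show ↥(Ksub j) from d) : ↥(Dg.obj j) × ↥B).1 = 0 := by
            rw [← cjeq, hKval j (show ↥(Ksub j) from d), h2, map_zero]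
          obtain ⟨k, t, ht⟩ := eventually_zero Dg hc j _ h0
          exact ⟨k, t, Subtype.ext (Prod.ext_iff.mpr ⟨ht, h2⟩)⟩
      exact vogelClassC_closed.2.1 J iJ fJ PB sB hcol.some hPB
    · -- stability under cokernels of cofibrations
      intro X Y P ι p hιinj hpsurj hexact2 hX hY
      refine ⟨vogelClassC_closed.2.2 X Y P ι p hιinj hpsurj hexact2 hX.1 hY.1, ?_⟩
      intro A B f g hinj hsurj hexact hA
      let Dsub : Submodule C (Y × B) :=
        LinearMap.ker ((p ∘ₗ LinearMap.fst C Y B) - (g ∘ₗ LinearMap.snd C Y B))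
      let DD : ModuleCat.{u} C := ModuleCat.of C ↥Dsub
      have hmemD : ∀ (y : Y) (b : B), p y = g b → (y, b) ∈ Dsub := by
        intro y b h
        show p y - g b = 0
        rw [h, sub_self]
      have hDval : ∀ d : ↥Dsub, p (d : ↥Y × ↥B).1 = g (d : ↥Y × ↥B).2 := by
        intro d
        have hm : p (d : ↥Y × ↥B).1 - g (d : ↥Y × ↥B).2 = 0 := d.2
        exact sub_eq_zero.mp hm
      let φ : A →ₗ[C] DD := LinearMap.codRestrict Dsub ((LinearMap.inr C Y B) ∘ₗ f)
        (fun a => hmemD 0 (f a) (by rw [map_zero]; exact (hexact.apply_apply_eq_zero a).symm))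
      let ψ : DD →ₗ[C] Y := (LinearMap.fst C Y B) ∘ₗ Dsub.subtype
      have hφinj : Function.Injective φ := by
        intro a b hab
        exact hinj (congrArg (fun z : ↥Dsub => (z : ↥Y × ↥B).2) hab)
      have hψsurj : Function.Surjective ψ := by
        intro y
        obtain ⟨b, hb⟩ := hsurj (p y)
        exact ⟨⟨(y, b), hmemD y b hb.symm⟩, rfl⟩
      have hexactφψ : Function.Exact φ ψ := by
        intro d
        constructor
        · intro hd
          have h1 : ((show ↥Dsub from d) : ↥Y × ↥B).1 = 0 := hd
          have h0 : g ((show ↥Dsub from d) : ↥Y × ↥B).2 = 0 := by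
            rw [← hDval (show ↥Dsub from d), h1, map_zero]
          obtain ⟨a, ha⟩ := (hexact _).mp h0
          exact ⟨a, Subtype.ext (Prod.ext_iff.mpr ⟨h1.symm, ha⟩)⟩
        · rintro ⟨a, rfl⟩
          rfl
      have hDD : DD ∈ VogelClassC C := hY.2 A DD φ ψ hφinj hψsurj hexactφψ hA
      let φ₂ : X →ₗ[C] DD := LinearMap.codRestrict Dsub ((LinearMap.inl C Y B) ∘ₗ ι)
        (fun x => hmemD (ι x) 0 (by rw [map_zero]; exact hexact2.apply_apply_eq_zero x))
      let ψ₂ : DD →ₗ[C] B := (LinearMap.snd C Y B) ∘ₗ Dsub.subtype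
      have hφ₂inj : Function.Injective φ₂ := by
        intro a b hab
        exact hιinj (congrArg (fun z : ↥Dsub => (z : ↥Y × ↥B).1) hab)
      have hψ₂surj : Function.Surjective ψ₂ := by
        intro b
        obtain ⟨y, hy⟩ := hpsurj (g b)
        exact ⟨⟨(y, b), hmemD y b hy⟩, rfl⟩
      have hexactφ₂ψ₂ : Function.Exact φ₂ ψ₂ := by
        intro d
        constructor
        · intro hd
          have h2 : ((show ↥Dsub from d) : ↥Y × ↥B).2 = 0 := hd
          have h0 : p ((show ↥Dsub from d) : ↥Y × ↥B).1 = 0 := by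
            rw [hDval (show ↥Dsub from d), h2, map_zero]
          obtain ⟨x, hx⟩ := (hexact2 _).mp h0
          exact ⟨x, Subtype.ext (Prod.ext_iff.mpr ⟨hx, h2.symm⟩)⟩
        · rintro ⟨x, rfl⟩
          rfl
      exact vogelClassC_closed.2.2 X DD B φ₂ ψ₂ hφ₂inj hψ₂surj hexactφ₂ψ₂ hX.1 hDD
  exact (hQ TB hTB).2 A B f g hinj hsurj hexact hA

end ExtClosure


section Main

/-- The main induction: kernels of epimorphisms from modules of `𝒞` onto modules of `𝒞`
belong to `𝒞`. -/
lemma ker_mem_of_mem (M : ModuleCat.{u} C) (hM : M ∈ VogelClassC C) :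
    ∀ (K X : ModuleCat.{u} C) (f : K →ₗ[C] X) (g : X →ₗ[C] M),
      Function.Injective f → Function.Surjective g → Function.Exact f g →
      X ∈ VogelClassC C → K ∈ VogelClassC C := by
  let T : Set (ModuleCat.{u} C) :=
    {M | M ∈ VogelClassC C ∧ ∀ (K X : ModuleCat.{u} C) (f : K →ₗ[C] X) (g : X →ₗ[C] M),
      Function.Injective f → Function.Surjective g → Function.Exact f g →
      X ∈ VogelClassC C → K ∈ VogelClassC C}
  have hT : IsFreeColimCokerClosed C T := by
    refine ⟨?_, ?_, ?_⟩
    · -- free case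
      intro Q hQfree
      refine ⟨vogelClassC_closed.1 Q hQfree, ?_⟩
      intro K X f g hfinj hgsurj hexact hX
      haveI : Module.Free C Q := hQfree; haveI : Module.Projective C Q := Module.Projective.of_free
      obtain ⟨σ, hσ⟩ := Module.projective_lifting_property g LinearMap.id hgsurj
      have hgσ : ∀ q : Q, g (σ q) = q := fun q => DFunLike.congr_fun hσ q
      let r : X →ₗ[C] ↥(LinearMap.ker g) := LinearMap.codRestrict (LinearMap.ker g)
        (LinearMap.id - σ ∘ₗ g) (fun x => by
          show g (x - σ (g x)) = 0
          rw [map_sub, hgσ (g x), sub_self])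
      have hker : ModuleCat.of C ↥(LinearMap.ker g) ∈ VogelClassC C := by
        refine mem_of_retract vogelClassC_closed.2.1 X hX (ModuleCat.of C ↥(LinearMap.ker g))
          r (LinearMap.ker g).subtype (fun k => Subtype.ext ?_)
        show ((show ↥(LinearMap.ker g) from k) : X) - σ (g ((show ↥(LinearMap.ker g) from k) : X))
          = ((show ↥(LinearMap.ker g) from k) : X)
        rw [show g ((show ↥(LinearMap.ker g) from k) : X) = 0 from (show ↥(LinearMap.ker g) from k).2,
          map_zero, sub_zero]
      have hrange : LinearMap.range f = LinearMap.ker g := (LinearMap.exact_iff.mp hexact).symm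
      let e : ↥K ≃ₗ[C] ↥(LinearMap.ker g) :=
        (LinearEquiv.ofInjective f hfinj).trans (LinearEquiv.ofEq _ _ hrange)
      exact mem_of_linearEquiv vogelClassC_closed.2.1
        (ModuleCat.of C ↥(LinearMap.ker g)) K e.symm hker
    · -- filtered colimit case
      intro J iJ fJ Dg c hc hmem
      refine ⟨vogelClassC_closed.2.1 J iJ fJ Dg c hc (fun j => (hmem j).1), ?_⟩
      intro K X f g hfinj hgsurj hexact hX
      classical
      -- functorial free covers `G j → Dg j` whose colimit is free
      let Sf : J → Type u := fun j => Σ j' : J, (j' ⟶ j) × (Dg.obj j' : Type u)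
      let Sm : ∀ {i j : J}, (i ⟶ j) → Sf i → Sf j := fun {i j} t x => ⟨x.1, x.2.1 ≫ t, x.2.2⟩
      have hSmid : ∀ j : J, (Sm (𝟙 j) : Sf j → Sf j) = id := by
        intro j
        funext x
        show (⟨x.1, x.2.1 ≫ 𝟙 j, x.2.2⟩ : Sf j) = x
        rw [Category.comp_id]
      have hSmcomp : ∀ {i j k : J} (t1 : i ⟶ j) (t2 : j ⟶ k),
          (Sm (t1 ≫ t2) : Sf i → Sf k) = (Sm t2) ∘ (Sm t1) := by
        intro i j k t1 t2
        funext x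
        show (⟨x.1, x.2.1 ≫ (t1 ≫ t2), x.2.2⟩ : Sf k) = ⟨x.1, (x.2.1 ≫ t1) ≫ t2, x.2.2⟩
        rw [Category.assoc]
      let π : ∀ j : J, ((Sf j →₀ C) →ₗ[C] Dg.obj j) := fun j =>
        Finsupp.linearCombination C (fun x : Sf j => Dg.map x.2.1 x.2.2)
      have hπs : ∀ (j : J) (x : Sf j) (b : C),
          π j (Finsupp.single x b) = b • Dg.map x.2.1 x.2.2 :=
        fun j x b => Finsupp.linearCombination_single (R := C) b x
      have hπsurj : ∀ j : J, Function.Surjective (π j) := by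
        intro j a
        refine ⟨Finsupp.single ⟨j, 𝟙 j, a⟩ 1, ?_⟩
        rw [hπs, one_smul]
        show (Dg.map (𝟙 j)) a = a
        rw [Dg.map_id]
        rfl
      have hπnat : ∀ {i j : J} (t : i ⟶ j) (w : Sf i →₀ C),
          π j (Finsupp.mapDomain (Sm t) w) = Dg.map t (π i w) := by
        intro i j t w
        have heq : (π j) ∘ₗ (Finsupp.lmapDomain C C (Sm t))
            = ((Dg.map t).hom : Dg.obj i →ₗ[C] Dg.obj j) ∘ₗ (π i) := by
          refine Finsupp.lhom_ext fun a b => ?_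
          rw [LinearMap.comp_apply, LinearMap.comp_apply, Finsupp.lmapDomain_apply,
            Finsupp.mapDomain_single, hπs, hπs, map_smul]
          congr 1
          show (Dg.map (a.2.1 ≫ t)) a.2.2 = (Dg.map t) ((Dg.map a.2.1) a.2.2)
          rw [Dg.map_comp]
          rfl
        have h2 := DFunLike.congr_fun heq w
        rw [LinearMap.comp_apply, LinearMap.comp_apply, Finsupp.lmapDomain_apply] at h2
        exact h2
      -- the free module `Ghat` covering the colimit
      let Sinf : Type u := Σ j' : J, (Dg.obj j' : Type u)
      let πh : (Sinf →₀ C) →ₗ[C] c.pt :=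
        Finsupp.linearCombination C (fun x : Sinf => c.ι.app x.1 x.2)
      have hπhs : ∀ (x : Sinf) (b : C), πh (Finsupp.single x b) = b • c.ι.app x.1 x.2 :=
        fun x b => Finsupp.linearCombination_single (R := C) b x
      have hπhsurj : Function.Surjective πh := by
        intro m
        obtain ⟨j, a, ha⟩ := Concrete.isColimit_exists_rep Dg hc m
        refine ⟨Finsupp.single ⟨j, a⟩ 1, ?_⟩
        rw [hπhs, one_smul]
        exact ha
      let pr : ∀ j : J, Sf j → Sinf := fun j x => ⟨x.1, x.2.2⟩
      let κ : ∀ j : J, ((Sf j →₀ C) →ₗ[C] (Sinf →₀ C)) := fun j => Finsupp.lmapDomain C C (pr j)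
      have hκval : ∀ (j : J) (w : Sf j →₀ C), κ j w = Finsupp.mapDomain (pr j) w :=
        fun j w => Finsupp.lmapDomain_apply _ _ _ _
      have hκnat : ∀ {i j : J} (t : i ⟶ j) (w : Sf i →₀ C),
          κ j (Finsupp.mapDomain (Sm t) w) = κ i w := by
        intro i j t w
        rw [hκval, hκval, ← Finsupp.mapDomain_comp]
        rfl
      have hπκ : ∀ (j : J) (w : Sf j →₀ C), πh (κ j w) = c.ι.app j (π j w) := by
        intro j w
        have heq : πh ∘ₗ (κ j) = ((c.ι.app j).hom : Dg.obj j →ₗ[C] c.pt) ∘ₗ (π j) := by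
          refine Finsupp.lhom_ext fun a b => ?_
          show πh ((κ j) (Finsupp.single a b)) = c.ι.app j ((π j) (Finsupp.single a b))
          rw [show (κ j) (Finsupp.single a b) = Finsupp.single (pr j a) b from by
              rw [hκval, Finsupp.mapDomain_single],
            hπhs, hπs, map_smul]
          congr 1
          have hw := ConcreteCategory.congr_hom (c.w a.2.1) a.2.2
          rw [mcomp_apply] at hw
          exact hw.symm
        exact DFunLike.congr_fun heq w
      -- the functor of kernels `W j = ker (π j)` and its cocone over `ker πh`
      let Wsub : ∀ j : J, Submodule C (Sf j →₀ C) := fun j => LinearMap.ker (π j)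
      let W : J ⥤ ModuleCat.{u} C :=
        { obj := fun j => ModuleCat.of C ↥(Wsub j)
          map := fun {i j} t => ModuleCat.ofHom <| LinearMap.codRestrict (Wsub j)
            ((Finsupp.lmapDomain C C (Sm t)) ∘ₗ (Wsub i).subtype)
            (fun w => by
              show π j (Finsupp.lmapDomain C C (Sm t) ((show ↥(Wsub i) from w) : Sf i →₀ C)) = 0
              rw [Finsupp.lmapDomain_apply, hπnat,
                show π i ((show ↥(Wsub i) from w) : Sf i →₀ C) = 0 from (show ↥(Wsub i) from w).2,
                map_zero])
          map_id := fun j => by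
            refine ModuleCat.hom_ext (LinearMap.ext fun w => Subtype.ext ?_)
            show Finsupp.lmapDomain C C (Sm (𝟙 j)) ((show ↥(Wsub j) from w) : Sf j →₀ C)
              = ((show ↥(Wsub j) from w) : Sf j →₀ C)
            rw [Finsupp.lmapDomain_apply, hSmid, Finsupp.mapDomain_id]
          map_comp := fun {i j k} t1 t2 => by
            refine ModuleCat.hom_ext (LinearMap.ext fun w => Subtype.ext ?_)
            show Finsupp.lmapDomain C C (Sm (t1 ≫ t2)) ((show ↥(Wsub i) from w) : Sf i →₀ C) = _
            rw [Finsupp.lmapDomain_apply, hSmcomp, Finsupp.mapDomain_comp]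
            rfl }
      have hWmem : ∀ j : J, W.obj j ∈ VogelClassC C := by
        intro j
        refine (hmem j).2 (ModuleCat.of C ↥(Wsub j)) (ModuleCat.of C (Sf j →₀ C))
          (Wsub j).subtype (π j) (Submodule.injective_subtype _) (hπsurj j)
          (fun y => ⟨fun h => ⟨⟨y, h⟩, rfl⟩, by rintro ⟨k, rfl⟩; exact k.2⟩)
          (vogelClassC_closed.1 _ (inferInstanceAs (Module.Free C (Sf j →₀ C))))
      let Winf : Submodule C (Sinf →₀ C) := LinearMap.ker πh
      let sW : Cocone W :=
        { pt := ModuleCat.of C ↥Winf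
          ι := { app := fun j => ModuleCat.ofHom <| LinearMap.codRestrict Winf ((κ j) ∘ₗ (Wsub j).subtype)
                   (fun w => by
                     show πh (κ j ((show ↥(Wsub j) from w) : Sf j →₀ C)) = 0
                     rw [hπκ,
                       show π j ((show ↥(Wsub j) from w) : Sf j →₀ C) = 0
                         from (show ↥(Wsub j) from w).2,
                       map_zero])
                 naturality := fun i j t => by
                   refine ModuleCat.hom_ext (LinearMap.ext fun w => Subtype.ext ?_)
                   show κ j (Finsupp.lmapDomain C C (Sm t)
                       ((show ↥(Wsub i) from w) : Sf i →₀ C))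
                     = κ i ((show ↥(Wsub i) from w) : Sf i →₀ C)
                   rw [Finsupp.lmapDomain_apply]
                   exact hκnat t _ } }
      -- surjectivity of the cocone legs (jointly)
      have hsurjW : ∀ y : ↥Winf, ∃ (j : J) (w : ↥(Wsub j)),
          (κ j) (w : Sf j →₀ C) = (y : Sinf →₀ C) := by
        intro y
        obtain ⟨z, hz⟩ := IsFiltered.sup_objs_exists
          ((y : Sinf →₀ C).support.image (fun x : Sinf => x.1))
        let φf : Sinf → Sf z := fun x =>
          if h : Nonempty (x.1 ⟶ z) then ⟨x.1, h.some, x.2⟩ else ⟨z, 𝟙 z, 0⟩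
        have hφf : ∀ x ∈ (y : Sinf →₀ C).support, (pr z ∘ φf) x = id x := by
          intro x hx
          have hne : Nonempty (x.1 ⟶ z) := hz (Finset.mem_image_of_mem _ hx)
          show pr z (φf x) = x
          rw [show φf x = ⟨x.1, hne.some, x.2⟩ from dif_pos hne]
        let wt : Sf z →₀ C := Finsupp.mapDomain φf (y : Sinf →₀ C)
        have hκwt : κ z wt = (y : Sinf →₀ C) := by
          rw [hκval, show wt = Finsupp.mapDomain φf (y : Sinf →₀ C) from rfl,
            ← Finsupp.mapDomain_comp, Finsupp.mapDomain_congr hφf, Finsupp.mapDomain_id]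
        have hcz : c.ι.app z (π z wt) = 0 := by
          rw [← hπκ z wt, hκwt]
          exact y.2
        obtain ⟨z2, t, ht⟩ := eventually_zero Dg hc z (π z wt) hcz
        refine ⟨z2, ⟨Finsupp.mapDomain (Sm t) wt, ?_⟩, ?_⟩
        · show π z2 (Finsupp.mapDomain (Sm t) wt) = 0
          rw [hπnat]
          exact ht
        · show κ z2 (Finsupp.mapDomain (Sm t) wt) = (y : Sinf →₀ C)
          rw [hκnat, hκwt]
      -- eventual vanishing
      have hzeroW : ∀ (j : J) (w : ↥(Wsub j)), (κ j) (w : Sf j →₀ C) = 0 →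
          ∃ (k : J) (t : j ⟶ k), Finsupp.mapDomain (Sm t) (w : Sf j →₀ C) = 0 := by
        intro j w hw
        set y : Sf j →₀ C := (w : Sf j →₀ C) with hy
        let O : Finset J := insert j (y.support.image (fun x : Sf j => x.1))
        have hjO : j ∈ O := Finset.mem_insert_self _ _
        have hmemO : ∀ x ∈ y.support, x.1 ∈ O :=
          fun x hx => Finset.mem_insert_of_mem (Finset.mem_image_of_mem _ hx)
        let H : Finset (Σ' (X' Y' : J) (_ : X' ∈ O) (_ : Y' ∈ O), X' ⟶ Y') :=
          y.support.attach.image (fun x =>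
            ⟨x.1.1, j, hmemO x.1 x.2, hjO, x.1.2.1⟩)
        obtain ⟨Z, T, hT⟩ := IsFiltered.sup_exists O H
        refine ⟨Z, T hjO, ?_⟩
        have hu : ∀ (x : Sf j) (hx : x ∈ y.support), x.2.1 ≫ T hjO = T (hmemO x hx) := by
          intro x hx
          refine hT (hmemO x hx) hjO ?_
          exact Finset.mem_image_of_mem _ (Finset.mem_attach _ ⟨x, hx⟩)
        have hinjOn : Set.InjOn (pr Z) ↑(y.support.image (Sm (T hjO))) := by
          intro x1 hx1 x2 hx2 heq
          obtain ⟨s1, hs1, rfl⟩ := Finset.mem_image.mp (by exact_mod_cast hx1)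
          obtain ⟨s2, hs2, rfl⟩ := Finset.mem_image.mp (by exact_mod_cast hx2)
          obtain ⟨a1, u1, m1⟩ := s1
          obtain ⟨a2, u2, m2⟩ := s2
          have h1 : a1 = a2 := congrArg Sigma.fst heq
          subst h1
          have h2 : m1 = m2 := by
            have := (Sigma.mk.inj_iff.mp heq).2
            exact eq_of_heq this
          subst h2
          show Sm (T hjO) ⟨a1, u1, m1⟩ = Sm (T hjO) ⟨a1, u2, m1⟩
          show (⟨a1, u1 ≫ T hjO, m1⟩ : Sf Z) = ⟨a1, u2 ≫ T hjO, m1⟩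
          rw [hu ⟨a1, u1, m1⟩ hs1, hu ⟨a1, u2, m1⟩ hs2]
        have hsupp : ((Finsupp.mapDomain (Sm (T hjO)) y).support : Set (Sf Z)) ⊆
            ↑(y.support.image (Sm (T hjO))) := by
          exact_mod_cast Finsupp.mapDomain_support
        have h0 : Finsupp.mapDomain (pr Z) (Finsupp.mapDomain (Sm (T hjO)) y) = 0 := by
          rw [← Finsupp.mapDomain_comp]
          have hcomp : (pr Z ∘ Sm (T hjO) : Sf j → Sinf) = pr j := rfl
          rw [hcomp, ← hκval]
          exact hw
        refine Finsupp.mapDomain_injOn ↑(y.support.image (Sm (T hjO))) hinjOn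
          hsupp ?_ ?_
        · show ((0 : Sf Z →₀ C).support : Set (Sf Z)) ⊆ _
          rw [Finsupp.support_zero]
          exact_mod_cast Finset.empty_subset _
        · rw [h0, Finsupp.mapDomain_zero]
      have hWcol : Nonempty (IsColimit sW) := by
        apply isColimit_of_surj_of_eventually_zero
        · intro y
          obtain ⟨j, w, hw⟩ := hsurjW y
          exact ⟨j, w, Subtype.ext hw⟩
        · intro j w h0
          have h1 : (κ j) ((show ↥(Wsub j) from w) : Sf j →₀ C) = 0 := congrArg Subtype.val h0
          obtain ⟨k, t, ht⟩ := hzeroW j (show ↥(Wsub j) from w) h1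
          refine ⟨k, t, Subtype.ext ?_⟩
          show Finsupp.lmapDomain C C (Sm t) ((show ↥(Wsub j) from w) : Sf j →₀ C) = 0
          rw [Finsupp.lmapDomain_apply]
          exact ht
      have hWinf : ModuleCat.of C ↥Winf ∈ VogelClassC C :=
        vogelClassC_closed.2.1 J iJ fJ W sW hWcol.some hWmem
      -- the pullback `P` of `g` and `πh`
      let Psub : Submodule C (X × (Sinf →₀ C)) :=
        LinearMap.ker ((g ∘ₗ LinearMap.fst C X (Sinf →₀ C))
          - (πh ∘ₗ LinearMap.snd C X (Sinf →₀ C)))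
      let PP : ModuleCat.{u} C := ModuleCat.of C ↥Psub
      have hmemP : ∀ (x : X) (γ : Sinf →₀ C), g x = πh γ → (x, γ) ∈ Psub := by
        intro x γ h
        show g x - πh γ = 0
        rw [h, sub_self]
      have hPval : ∀ d : ↥Psub, g (d : ↥X × (Sinf →₀ C)).1 = πh (d : ↥X × (Sinf →₀ C)).2 := by
        intro d
        have hm : g (d : ↥X × (Sinf →₀ C)).1 - πh (d : ↥X × (Sinf →₀ C)).2 = 0 := d.2
        exact sub_eq_zero.mp hm
      -- 0 → Winf → P → X → 0 gives P ∈ 𝒞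
      let φW : (ModuleCat.of C ↥Winf) →ₗ[C] PP := LinearMap.codRestrict Psub
        ((LinearMap.inr C X (Sinf →₀ C)) ∘ₗ Winf.subtype)
        (fun w => hmemP 0 ((show ↥Winf from w) : Sinf →₀ C) (by
          rw [map_zero, show πh ((show ↥Winf from w) : Sinf →₀ C) = 0
            from (show ↥Winf from w).2]))
      let ψX : ↥Psub →ₗ[C] X := (LinearMap.fst C X (Sinf →₀ C)) ∘ₗ Psub.subtype
      have hφWinj : Function.Injective φW := by
        intro a b hab
        exact Subtype.ext (congrArg (fun z : ↥Psub => (z : ↥X × (Sinf →₀ C)).2) hab)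
      have hψXsurj : Function.Surjective ψX := by
        intro x
        obtain ⟨γ, hγ⟩ := hπhsurj (g x)
        exact ⟨⟨(x, γ), hmemP x γ hγ.symm⟩, rfl⟩
      have hexactWX : Function.Exact φW ψX := by
        intro d
        constructor
        · intro hd
          have h1 : ((show ↥Psub from d) : ↥X × (Sinf →₀ C)).1 = 0 := hd
          have h0 : πh ((show ↥Psub from d) : ↥X × (Sinf →₀ C)).2 = 0 := by
            rw [← hPval (show ↥Psub from d), h1, map_zero]
          refine ⟨⟨((show ↥Psub from d) : ↥X × (Sinf →₀ C)).2, h0⟩, ?_⟩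
          exact Subtype.ext (Prod.ext_iff.mpr ⟨h1.symm, rfl⟩)
        · rintro ⟨w, rfl⟩
          rfl
      have hPP : PP ∈ VogelClassC C :=
        ext_mem (ModuleCat.of C ↥Winf) PP X φW ψX hφWinj hψXsurj hexactWX hWinf hX
      -- the section `σ : Ghat → P` of the second projection
      let vP : Sinf → ↥Psub := fun x =>
        ⟨((hgsurj (c.ι.app x.1 x.2)).choose, Finsupp.single x 1),
          hmemP _ _ (by rw [(hgsurj (c.ι.app x.1 x.2)).choose_spec, hπhs, one_smul])⟩
      let σ : (Sinf →₀ C) →ₗ[C] ↥Psub := Finsupp.linearCombination C vP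
      have hσs : ∀ (x : Sinf) (b : C), σ (Finsupp.single x b) = b • vP x :=
        fun x b => Finsupp.linearCombination_single (R := C) b x
      let pr2 : ↥Psub →ₗ[C] (Sinf →₀ C) := (LinearMap.snd C X (Sinf →₀ C)) ∘ₗ Psub.subtype
      have hpr2σ : ∀ γ : Sinf →₀ C, pr2 (σ γ) = γ := by
        intro γ
        have heq : pr2 ∘ₗ σ = LinearMap.id := by
          refine Finsupp.lhom_ext fun a b => ?_
          rw [LinearMap.comp_apply, hσs, map_smul]
          show b • Finsupp.single a 1 = Finsupp.single a b
          rw [Finsupp.smul_single, smul_eq_mul, mul_one]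
        exact DFunLike.congr_fun heq γ
      have hσinj : Function.Injective σ := by
        intro a b hab
        rw [← hpr2σ a, ← hpr2σ b, hab]
      -- the retraction `q : P → ker g`
      let rmap : ↥Psub →ₗ[C] X := ψX - ψX ∘ₗ σ ∘ₗ pr2
      have hrval : ∀ d : ↥Psub, rmap d
          = (d : ↥X × (Sinf →₀ C)).1 - ((σ (pr2 d)) : ↥X × (Sinf →₀ C)).1 := fun d => rfl
      have hrker : ∀ d : ↥Psub, g (rmap d) = 0 := by
        intro d
        rw [hrval, map_sub, hPval d, hPval (σ (pr2 d)),
          show ((σ (pr2 d)) : ↥X × (Sinf →₀ C)).2 = pr2 d from hpr2σ (pr2 d)]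
        exact sub_self _
      let q : ↥Psub →ₗ[C] ↥(LinearMap.ker g) := LinearMap.codRestrict _ rmap hrker
      have hqval : ∀ d : ↥Psub, (q d : X) = rmap d := fun d => rfl
      have hqsurj : Function.Surjective q := by
        intro k
        refine ⟨⟨((k : X), 0), hmemP _ _ (by
          rw [show g (k : X) = 0 from k.2, map_zero])⟩, Subtype.ext ?_⟩
        rw [hqval, hrval]
        show (k : X) - ((σ (0 : Sinf →₀ C)) : ↥X × (Sinf →₀ C)).1 = (k : X)
        rw [map_zero]
        show (k : X) - 0 = (k : X)
        rw [sub_zero]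
      have hexactσq : Function.Exact σ q := by
        intro d
        constructor
        · intro hd
          have h1 : rmap d = 0 := congrArg Subtype.val hd
          rw [hrval] at h1
          have h2 : (d : ↥X × (Sinf →₀ C)).1 = ((σ (pr2 d)) : ↥X × (Sinf →₀ C)).1 :=
            sub_eq_zero.mp h1
          exact ⟨pr2 d, Subtype.ext (Prod.ext_iff.mpr ⟨h2.symm, hpr2σ (pr2 d)⟩)⟩
        · rintro ⟨γ, rfl⟩
          refine Subtype.ext ?_
          rw [hqval, hrval, show pr2 (σ γ) = γ from hpr2σ γ]
          show (σ γ : ↥X × (Sinf →₀ C)).1 - (σ γ : ↥X × (Sinf →₀ C)).1 = 0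
          rw [sub_self]
      have hkerg : ModuleCat.of C ↥(LinearMap.ker g) ∈ VogelClassC C :=
        vogelClassC_closed.2.2 (ModuleCat.of C (Sinf →₀ C)) PP
          (ModuleCat.of C ↥(LinearMap.ker g)) σ q hσinj hqsurj hexactσq
          (vogelClassC_closed.1 _ (inferInstanceAs (Module.Free C (Sinf →₀ C)))) hPP
      have hrange : LinearMap.range f = LinearMap.ker g := (LinearMap.exact_iff.mp hexact).symm
      let e : ↥K ≃ₗ[C] ↥(LinearMap.ker g) :=
        (LinearEquiv.ofInjective f hfinj).trans (LinearEquiv.ofEq _ _ hrange)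
      exact mem_of_linearEquiv vogelClassC_closed.2.1
        (ModuleCat.of C ↥(LinearMap.ker g)) K e.symm hkerg
    · -- cokernel case
      intro Aq Nq Pq ι p hιinj hpsurj hexact2 hAq hNq
      refine ⟨vogelClassC_closed.2.2 Aq Nq Pq ι p hιinj hpsurj hexact2 hAq.1 hNq.1, ?_⟩
      intro K X f g hfinj hgsurj hexact hX
      let Dsub : Submodule C (Nq × X) :=
        LinearMap.ker ((p ∘ₗ LinearMap.fst C Nq X) - (g ∘ₗ LinearMap.snd C Nq X))
      let DD : ModuleCat.{u} C := ModuleCat.of C ↥Dsub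
      have hmemD : ∀ (y : Nq) (x : X), p y = g x → (y, x) ∈ Dsub := by
        intro y x h
        show p y - g x = 0
        rw [h, sub_self]
      have hDval : ∀ d : ↥Dsub, p (d : ↥Nq × ↥X).1 = g (d : ↥Nq × ↥X).2 := by
        intro d
        have hm : p (d : ↥Nq × ↥X).1 - g (d : ↥Nq × ↥X).2 = 0 := d.2
        exact sub_eq_zero.mp hm
      -- 0 → Aq → DD → X → 0, hence DD ∈ 𝒞 by extension closure
      let φA : Aq →ₗ[C] DD := LinearMap.codRestrict Dsub ((LinearMap.inl C Nq X) ∘ₗ ι)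
        (fun a => hmemD (ι a) 0 (by rw [map_zero]; exact hexact2.apply_apply_eq_zero a))
      let ψX : DD →ₗ[C] X := (LinearMap.snd C Nq X) ∘ₗ Dsub.subtype
      have hφAinj : Function.Injective φA := by
        intro a b hab
        exact hιinj (congrArg (fun z : ↥Dsub => (z : ↥Nq × ↥X).1) hab)
      have hψXsurj : Function.Surjective ψX := by
        intro x
        obtain ⟨y, hy⟩ := hpsurj (g x)
        exact ⟨⟨(y, x), hmemD y x hy⟩, rfl⟩
      have hexactAX : Function.Exact φA ψX := by
        intro d
        constructor
        · intro hd
          have h2 : ((show ↥Dsub from d) : ↥Nq × ↥X).2 = 0 := hd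
          have h0 : p ((show ↥Dsub from d) : ↥Nq × ↥X).1 = 0 := by
            rw [hDval (show ↥Dsub from d), h2, map_zero]
          obtain ⟨a, ha⟩ := (hexact2 _).mp h0
          exact ⟨a, Subtype.ext (Prod.ext_iff.mpr ⟨ha, h2.symm⟩)⟩
        · rintro ⟨a, rfl⟩
          rfl
      have hDD : DD ∈ VogelClassC C := ext_mem Aq DD X φA ψX hφAinj hψXsurj hexactAX hAq.1 hX
      -- 0 → K → DD → Nq → 0, hence K ∈ 𝒞 since Nq ∈ T
      let φK : K →ₗ[C] DD := LinearMap.codRestrict Dsub ((LinearMap.inr C Nq X) ∘ₗ f)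
        (fun k => hmemD 0 (f k) (by rw [map_zero]; exact (hexact.apply_apply_eq_zero k).symm))
      let ψN : DD →ₗ[C] Nq := (LinearMap.fst C Nq X) ∘ₗ Dsub.subtype
      have hφKinj : Function.Injective φK := by
        intro a b hab
        exact hfinj (congrArg (fun z : ↥Dsub => (z : ↥Nq × ↥X).2) hab)
      have hψNsurj : Function.Surjective ψN := by
        intro y
        obtain ⟨x, hx⟩ := hgsurj (p y)
        exact ⟨⟨(y, x), hmemD y x hx.symm⟩, rfl⟩
      have hexactKN : Function.Exact φK ψN := by
        intro d
        constructor
        · intro hd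
          have h1 : ((show ↥Dsub from d) : ↥Nq × ↥X).1 = 0 := hd
          have h0 : g ((show ↥Dsub from d) : ↥Nq × ↥X).2 = 0 := by
            rw [← hDval (show ↥Dsub from d), h1, map_zero]
          obtain ⟨k, hk⟩ := (hexact _).mp h0
          exact ⟨k, Subtype.ext (Prod.ext_iff.mpr ⟨h1.symm, hk⟩)⟩
        · rintro ⟨k, rfl⟩
          rfl
      exact hNq.2 K DD φK ψN hφKinj hψNsurj hexactKN hDD
  exact (hM T hT).2

end Main

end VogelAux

/-- if `f : F → M` is an epimorphism from a free `C`-module onto a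
module `M` belonging to the smallest class `𝒞` (containing all free modules, stable
under filtered colimits and under cokernels of cofibrations), then the kernel of `f`
belongs to `𝒞`. -/
theorem ker_mem_vogelClassC (C : Type u) [Ring C]
    (F M : ModuleCat.{u} C) (hF : Module.Free C F)
    (f : F →ₗ[C] M) (hf : Function.Surjective f)
    (hM : M ∈ VogelClassC C) :
    ModuleCat.of C (LinearMap.ker f) ∈ VogelClassC C := by
  refine VogelAux.ker_mem_of_mem M hM (ModuleCat.of C (LinearMap.ker f)) F
    (LinearMap.ker f).subtype f (Submodule.injective_subtype _) hf
    (fun y => ⟨fun h => ⟨⟨y, h⟩, rfl⟩, by rintro ⟨k, rfl⟩; exact k.2⟩)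
    (VogelAux.vogelClassC_closed.1 F hF)
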